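/- Let p ≥ 2 and n ≥ 1, let X be a real n×p matrix whose columns X_1,…,X_p satisfy ‖X_j‖₂² = n, and let z_1,…,z_n be independent real random variables with P(z_i > 0) = P(z_i < 0) = 1/2 (continuous with median 0). Let S = Xᵀ(sign(z_1),…,sign(z_n))ᵀ. Fix α ∈ (0,1), a constant c > 0, and A > 0 with 2·p^{-(A-1)} ≤ α. Then the penalty level λ = c·√(2·A·n·log p) satisfies P(λ ≥ c·‖S‖_∞) ≥ 1 − α. -/

import Mathlib

open MeasureTheory ProbabilityTheory
open scoped ENNReal

lemma measurable_realSign : Measurable Real.sign := by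
  have h : Real.sign = fun r : ℝ => if r < 0 then (-1 : ℝ) else if 0 < r then 1 else 0 := by
    funext r; rfl
  rw [h]
  exact Measurable.ite measurableSet_Iio measurable_const
    (Measurable.ite measurableSet_Ioi measurable_const measurable_const)

lemma abs_realSign_le (x : ℝ) : |Real.sign x| ≤ 1 := by
  rcases Real.sign_apply_eq x with h | h | h <;> rw [h] <;> norm_num

lemma integral_exp_sign {Ω : Type*} [MeasurableSpace Ω] (μ : Measure Ω)
    [IsProbabilityMeasure μ] (W : Ω → ℝ) (hW : Measurable W)
    (hpos : μ {ω | 0 < W ω} = 1 / 2) (hneg : μ {ω | W ω < 0} = 1 / 2) (t : ℝ) :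
    ∫ ω, Real.exp (t * Real.sign (W ω)) ∂μ = Real.cosh t := by
  set P : Set Ω := {ω | 0 < W ω} with hP
  set N : Set Ω := {ω | W ω < 0} with hN
  have hPm : MeasurableSet P := measurableSet_lt measurable_const hW
  have hNm : MeasurableSet N := measurableSet_lt hW measurable_const
  have hdis : Disjoint P N := by
    rw [Set.disjoint_left]; intro ω h1 h2
    simp only [hP, hN, Set.mem_setOf_eq] at h1 h2
    exact absurd (h1.trans h2) (lt_irrefl _)
  have hPN : μ (P ∪ N) = 1 := by
    rw [measure_union hdis hNm, hpos, hneg]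
    exact ENNReal.add_halves 1
  have hae : ∀ᵐ ω ∂μ, ω ∈ P ∪ N := by
    rw [ae_iff]
    have : {ω | ¬ ω ∈ P ∪ N} = (P ∪ N)ᶜ := rfl
    rw [this, measure_compl (hPm.union hNm) (measure_ne_top μ _), measure_univ, hPN, tsub_self]
  have hcong : (fun ω => Real.exp (t * Real.sign (W ω))) =ᵐ[μ]
      (fun ω => P.indicator (fun _ => Real.exp t) ω + N.indicator (fun _ => Real.exp (-t)) ω) := by
    filter_upwards [hae] with ω hω
    rcases hω with h | h
    · have h' : 0 < W ω := h
      have hω' : ω ∉ N := fun h2 => absurd ((show W ω < 0 from h2).trans h') (lt_irrefl _)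
      simp [Set.indicator_of_mem h, Set.indicator_of_notMem hω', Real.sign_of_pos h']
    · have h' : W ω < 0 := h
      have hω' : ω ∉ P := fun h2 => absurd (h'.trans (show 0 < W ω from h2)) (lt_irrefl _)
      simp [Set.indicator_of_mem h, Set.indicator_of_notMem hω', Real.sign_of_neg h',
        mul_neg_one]
  rw [integral_congr_ae hcong, integral_add
      ((integrable_indicator_iff hPm).mpr ((integrableOn_const_iff).mpr (Or.inr (measure_lt_top μ _))))
      ((integrable_indicator_iff hNm).mpr ((integrableOn_const_iff).mpr (Or.inr (measure_lt_top μ _)))),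
    integral_indicator_const _ hPm, integral_indicator_const _ hNm, measureReal_def, measureReal_def, hpos, hneg]
  have : ((1 : ℝ≥0∞) / 2).toReal = (1 : ℝ) / 2 := by simp
  rw [this, Real.cosh_eq, smul_eq_mul, smul_eq_mul]
  ring

lemma tail_bound {Ω : Type*} [MeasurableSpace Ω] (μ : Measure Ω) [IsProbabilityMeasure μ]
    {n : ℕ} (hn : 1 ≤ n) (z : Fin n → Ω → ℝ) (hmeas : ∀ i, Measurable (z i))
    (hindep : iIndepFun z μ)
    (hpos : ∀ i, μ {ω | 0 < z i ω} = 1 / 2) (hneg : ∀ i, μ {ω | z i ω < 0} = 1 / 2)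
    (w : Fin n → ℝ) (hw : ∑ i, w i ^ 2 = (n : ℝ)) (s : ℝ) (hs : 0 ≤ s) :
    μ {ω | s ≤ ∑ i, w i * Real.sign (z i ω)} ≤
      ENNReal.ofReal (Real.exp (-(s ^ 2) / (2 * n))) := by
  have hnR : (0 : ℝ) < n := by exact_mod_cast hn
  set Y : Fin n → Ω → ℝ := fun i ω => w i * Real.sign (z i ω) with hY
  have hYmeas : ∀ i, Measurable (Y i) := fun i =>
    (measurable_realSign.comp (hmeas i)).const_mul (w i)
  have hYindep : iIndepFun Y μ :=
    hindep.comp (fun i x => w i * Real.sign x)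
      (fun i => measurable_realSign.const_mul (w i))
  set t : ℝ := s / n with ht
  have htpos : 0 ≤ t := div_nonneg hs hnR.le
  have habsY : ∀ i ω, |Y i ω| ≤ |w i| := by
    intro i ω
    rw [hY, abs_mul]
    calc |w i| * |Real.sign (z i ω)| ≤ |w i| * 1 := by
          gcongr; exact abs_realSign_le _
    _ = |w i| := mul_one _
  -- mgf of each coordinate
  have hmgf : ∀ i, mgf (Y i) μ t = Real.cosh (t * w i) := by
    intro i
    have h1 : mgf (Y i) μ t = ∫ ω, Real.exp ((t * w i) * Real.sign (z i ω)) ∂μ := by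
      rw [mgf]
      congr 1
      funext ω
      rw [hY]
      ring_nf
    rw [h1]
    exact integral_exp_sign μ (z i) (hmeas i) (hpos i) (hneg i) (t * w i)
  have hmgfS : mgf (∑ i, Y i) μ t ≤ Real.exp (t ^ 2 * n / 2) := by
    rw [hYindep.mgf_sum hYmeas Finset.univ]
    calc ∏ i, mgf (Y i) μ t = ∏ i, Real.cosh (t * w i) :=
          Finset.prod_congr rfl fun i _ => hmgf i
    _ ≤ ∏ i, Real.exp ((t * w i) ^ 2 / 2) :=
          Finset.prod_le_prod (fun i _ => (Real.cosh_pos _).le)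
            (fun i _ => Real.cosh_le_exp_half_sq _)
    _ = Real.exp (∑ i, (t * w i) ^ 2 / 2) := (Real.exp_sum _ _).symm
    _ = Real.exp (t ^ 2 * n / 2) := by
          congr 1
          have : ∀ i : Fin n, (t * w i) ^ 2 / 2 = (t ^ 2 / 2) * w i ^ 2 := by
            intro i; ring
          rw [Finset.sum_congr rfl fun i _ => this i, ← Finset.mul_sum, hw]
          ring
  -- integrability of exp (t * sum)
  have hintS : Integrable (fun ω => Real.exp (t * (∑ i, Y i) ω)) μ := by
    have hm : Measurable fun ω => (∑ i, Y i) ω := by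
      simp only [Finset.sum_apply]
      exact Finset.measurable_sum Finset.univ fun i _ => hYmeas i
    refine Integrable.mono' (integrable_const (Real.exp (|t| * ∑ i, |w i|)))
      ((hm.const_mul t).exp.aestronglyMeasurable) (ae_of_all _ fun ω => ?_)
    rw [Real.norm_eq_abs, Real.abs_exp]
    apply Real.exp_le_exp.mpr
    calc t * (∑ i, Y i) ω ≤ |t * (∑ i, Y i) ω| := le_abs_self _
    _ = |t| * |∑ i, Y i ω| := by rw [abs_mul, Finset.sum_apply]
    _ ≤ |t| * ∑ i, |Y i ω| := by
          gcongr; exact Finset.abs_sum_le_sum_abs _ _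
    _ ≤ |t| * ∑ i, |w i| :=
          mul_le_mul_of_nonneg_left (Finset.sum_le_sum fun i _ => habsY i ω) (abs_nonneg t)
  -- Chernoff bound
  have hcher := measure_ge_le_exp_mul_mgf (μ := μ) (X := ∑ i, Y i) s htpos hintS
  have hset : {ω | s ≤ ∑ i, w i * Real.sign (z i ω)} = {ω | s ≤ (∑ i, Y i) ω} := by
    ext ω
    simp only [Set.mem_setOf_eq, Finset.sum_apply, hY]
  have hfinal : (μ {ω | s ≤ (∑ i, Y i) ω}).toReal ≤ Real.exp (-(s ^ 2) / (2 * n)) := by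
    calc (μ {ω | s ≤ (∑ i, Y i) ω}).toReal ≤ Real.exp (-t * s) * mgf (∑ i, Y i) μ t := hcher
    _ ≤ Real.exp (-t * s) * Real.exp (t ^ 2 * n / 2) := by
          gcongr
    _ = Real.exp (-t * s + t ^ 2 * n / 2) := (Real.exp_add _ _).symm
    _ = Real.exp (-(s ^ 2) / (2 * n)) := by
          congr 1
          rw [ht]
          field_simp
          ring
  rw [hset, ← ENNReal.ofReal_toReal (measure_ne_top μ _)]
  exact ENNReal.ofReal_le_ofReal hfinal

/-- **Choice of penalty for the L1 penalized LAD estimator (Lemma 1).**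
If the columns of `X` satisfy `‖X_j‖₂² = n`, the noise variables `z_i` are independent
with `P(z_i > 0) = P(z_i < 0) = 1/2`, and `S = Xᵀ sign(z)`, then for any `α ∈ (0,1)`,
`c > 0` and `A > 0` with `2 p^{-(A-1)} ≤ α`, the penalty `λ = c √(2 A n log p)`
satisfies `P(λ ≥ c ‖S‖_∞) ≥ 1 - α`. -/
theorem penalty_choice
    {Ω : Type*} [MeasurableSpace Ω] (μ : Measure Ω) [IsProbabilityMeasure μ]
    (n p : ℕ) (hn : 1 ≤ n) (hp : 2 ≤ p)
    (X : Matrix (Fin n) (Fin p) ℝ)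
    (hcol : ∀ j : Fin p, ∑ i, (X i j) ^ 2 = (n : ℝ))
    (z : Fin n → Ω → ℝ)
    (hmeas : ∀ i, Measurable (z i))
    (hindep : iIndepFun z μ)
    (hpos : ∀ i, μ {ω | 0 < z i ω} = 1 / 2)
    (hneg : ∀ i, μ {ω | z i ω < 0} = 1 / 2)
    (α : ℝ) (hα : α ∈ Set.Ioo (0 : ℝ) 1)
    (c A : ℝ) (hc : 0 < c) (hA : 0 < A)
    (hAα : 2 * (p : ℝ) ^ (-(A - 1) : ℝ) ≤ α)
    (lam : ℝ) (hlam : lam = c * Real.sqrt (2 * A * n * Real.log p)) :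
    ENNReal.ofReal (1 - α) ≤
      μ {ω | c * (⨆ j : Fin p, |∑ i, X i j * Real.sign (z i ω)|) ≤ lam} := by
  haveI : Nonempty (Fin p) := ⟨⟨0, by omega⟩⟩
  have hnR : (0 : ℝ) < n := by exact_mod_cast hn
  have hpR : (1 : ℝ) < p := by exact_mod_cast (by omega : 1 < p)
  have hp0 : (0 : ℝ) < p := by linarith
  have hlogp : 0 ≤ Real.log p := Real.log_nonneg hpR.le
  set s : ℝ := Real.sqrt (2 * A * n * Real.log p) with hsdef
  have hs : 0 ≤ s := Real.sqrt_nonneg _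
  have hs2 : s ^ 2 = 2 * A * n * Real.log p := by
    rw [hsdef, Real.sq_sqrt (by positivity)]
  set e : ℝ := Real.exp (-(s ^ 2) / (2 * n)) with hedef
  -- value of e
  have he : e = (p : ℝ) ^ (-A : ℝ) := by
    rw [hedef, Real.rpow_def_of_pos hp0, hs2]
    congr 1
    field_simp
  -- the union bound target sets
  set E : Set Ω := {ω | c * (⨆ j : Fin p, |∑ i, X i j * Real.sign (z i ω)|) ≤ lam} with hE
  set U : Set Ω := ⋃ j : Fin p,
      ({ω | s ≤ ∑ i, X i j * Real.sign (z i ω)} ∪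
       {ω | s ≤ ∑ i, (-X i j) * Real.sign (z i ω)}) with hU
  -- complement inclusion
  have hsub : Eᶜ ⊆ U := by
    intro ω hω
    simp only [hE, Set.mem_compl_iff, Set.mem_setOf_eq, not_le] at hω
    by_contra hcon
    simp only [hU, Set.mem_iUnion, Set.mem_union, Set.mem_setOf_eq, not_exists, not_or,
      not_le] at hcon
    have hsup : (⨆ j : Fin p, |∑ i, X i j * Real.sign (z i ω)|) ≤ s := by
      refine ciSup_le fun j => abs_le.mpr ⟨?_, (hcon j).1.le⟩
      have h2 := (hcon j).2
      have : ∑ i, (-X i j) * Real.sign (z i ω) = -∑ i, X i j * Real.sign (z i ω) := by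
        simp [neg_mul, Finset.sum_neg_distrib]
      rw [this] at h2
      linarith
    have : c * (⨆ j : Fin p, |∑ i, X i j * Real.sign (z i ω)|) ≤ c * s :=
      mul_le_mul_of_nonneg_left hsup hc.le
    rw [← hlam] at this
    exact absurd (lt_of_le_of_lt this hω) (lt_irrefl _)
  -- union bound
  have hUbound : μ U ≤ ENNReal.ofReal α := by
    have hterm : ∀ j : Fin p,
        μ ({ω | s ≤ ∑ i, X i j * Real.sign (z i ω)} ∪
           {ω | s ≤ ∑ i, (-X i j) * Real.sign (z i ω)}) ≤
          2 * ENNReal.ofReal e := by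
      intro j
      have h1 := tail_bound μ hn z hmeas hindep hpos hneg (fun i => X i j) (hcol j) s hs
      have h2 := tail_bound μ hn z hmeas hindep hpos hneg (fun i => -X i j)
        (by simpa [neg_sq] using hcol j) s hs
      calc μ _ ≤ μ {ω | s ≤ ∑ i, X i j * Real.sign (z i ω)} +
            μ {ω | s ≤ ∑ i, (-X i j) * Real.sign (z i ω)} := measure_union_le _ _
      _ ≤ ENNReal.ofReal e + ENNReal.ofReal e := add_le_add h1 h2
      _ = 2 * ENNReal.ofReal e := (two_mul _).symm
    calc μ U ≤ ∑' j : Fin p, μ _ := measure_iUnion_le _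
    _ = ∑ j : Fin p, μ _ := tsum_fintype _
    _ ≤ ∑ j : Fin p, 2 * ENNReal.ofReal e := Finset.sum_le_sum fun j _ => hterm j
    _ = (p : ℝ≥0∞) * (2 * ENNReal.ofReal e) := by
        rw [Finset.sum_const, Finset.card_univ, Fintype.card_fin, nsmul_eq_mul]
    _ ≤ ENNReal.ofReal α := by
        have hcalc : (p : ℝ) * (2 * e) = 2 * (p : ℝ) ^ (-(A - 1) : ℝ) := by
          rw [he]
          have : (p : ℝ) ^ (-(A - 1) : ℝ) = (p : ℝ) ^ (1 : ℝ) * (p : ℝ) ^ (-A : ℝ) := by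
            rw [← Real.rpow_add hp0]
            congr 1
            ring
          rw [this, Real.rpow_one]
          ring
        have : (p : ℝ≥0∞) * (2 * ENNReal.ofReal e) = ENNReal.ofReal ((p : ℝ) * (2 * e)) := by
          rw [ENNReal.ofReal_mul hp0.le, ENNReal.ofReal_mul (by norm_num : (0:ℝ) ≤ 2),
            ENNReal.ofReal_natCast, ENNReal.ofReal_ofNat]
        rw [this, hcalc]
        exact ENNReal.ofReal_le_ofReal hAα
  have hcompl : μ Eᶜ ≤ ENNReal.ofReal α := le_trans (measure_mono hsub) hUbound
  have hone : (1 : ℝ≥0∞) ≤ μ E + μ Eᶜ := by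
    rw [← measure_univ (μ := μ), ← Set.union_compl_self E]
    exact measure_union_le _ _
  have hsum : ENNReal.ofReal (1 - α) + ENNReal.ofReal α = 1 := by
    rw [← ENNReal.ofReal_add (by linarith [hα.2]) hα.1.le]
    norm_num
  have hfin : ENNReal.ofReal (1 - α) + ENNReal.ofReal α ≤ μ E + ENNReal.ofReal α := by
    rw [hsum]
    exact le_trans hone (add_le_add le_rfl hcompl)
  exact (ENNReal.add_le_add_iff_right ENNReal.ofReal_ne_top).mp hfin
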